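/- arXiv:1808.05530 — 3 statements merged into one kernel-verified Lean document; each statement's English description precedes it below -/
import Mathlib

section
/- Let d ≥ 1 be an integer, L_b > 0, β > 0, α ≥ 0 real constants, and let b : ℝ^d → ℝ^d be continuous and satisfy ⟨x − x', b(x) − b(x')⟩ ≤ L_b·‖x − x'‖² and ⟨x, b(x)⟩ ≤ α + β·‖x‖² for all x, x' ∈ ℝ^d. Then for every real h with 0 < h < 1/max(L_b, 2β) and every y ∈ ℝ^d, there exists a unique x ∈ ℝ^d such that x − h·b(x) = y. -/
open RealInnerProductSpace Module

theorem strongMono_surjective : ∀ (n : ℕ) (V : Type) [NormedAddCommGroup V]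
    [InnerProductSpace ℝ V] [FiniteDimensional ℝ V], finrank ℝ V = n →
    ∀ (c : ℝ), 0 < c → ∀ F : V → V, Continuous F →
    (∀ x z : V, c * ‖x - z‖ ^ 2 ≤ ⟪x - z, F x - F z⟫) → Function.Surjective F := by
  intro n
  induction n with
  | zero =>
    intro V _ _ _ hrank c hc F hF hmono y
    haveI : Subsingleton V := by
      rw [← Module.finrank_zero_iff (R := ℝ)]; exact hrank
    exact ⟨y, Subsingleton.elim _ _⟩
  | succ n ih =>
    intro V _ _ _ hrank c hc F hF hmono y
    haveI : Nontrivial V := Module.nontrivial_of_finrank_pos (R := ℝ) (by omega)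
    obtain ⟨x0, hx0⟩ := exists_ne (0 : V)
    set e : V := ‖x0‖⁻¹ • x0 with he_def
    have he : ‖e‖ = 1 := norm_smul_inv_norm hx0
    have he0 : e ≠ 0 := by intro h; rw [h, norm_zero] at he; norm_num at he
    set K : Submodule ℝ V := ℝ ∙ e with hK_def
    set W : Submodule ℝ V := Kᗮ with hW_def
    have hWrank : finrank ℝ W = n := by
      have h1 : finrank ℝ K = 1 := finrank_span_singleton he0
      have h2 := Submodule.finrank_add_finrank_orthogonal K
      rw [h1, hrank, ← hW_def] at h2
      omega
    -- the last-coordinate function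
    set ψ : W → ℝ → ℝ := fun w t => ⟪e, F ((w : V) + t • e)⟫ with hψ_def
    set yn : ℝ := ⟪e, y⟫ with hyn_def
    -- strong monotonicity of ψ in t
    have hψgap : ∀ (w : W) (s t : ℝ), s ≤ t → c * (t - s) ≤ ψ w t - ψ w s := by
      intro w s t hst
      rcases eq_or_lt_of_le hst with h | h
      · subst h; simp
      have hmx := hmono ((w : V) + t • e) ((w : V) + s • e)
      have hdiff : ((w : V) + t • e) - ((w : V) + s • e) = (t - s) • e := by
        rw [sub_smul]; abel
      rw [hdiff] at hmx
      rw [norm_smul, real_inner_smul_left] at hmx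
      have hts : 0 < t - s := by linarith
      have hne : ‖(t - s : ℝ)‖ = t - s := by
        rw [Real.norm_eq_abs, abs_of_pos hts]
      rw [hne, he, mul_one] at hmx
      have : c * (t - s) ^ 2 ≤ (t - s) * (ψ w t - ψ w s) := by
        calc c * (t - s) ^ 2 ≤ (t - s) * ⟪e, F ((w:V) + t • e) - F ((w:V) + s • e)⟫ := hmx
          _ = (t - s) * (ψ w t - ψ w s) := by rw [inner_sub_right]
      nlinarith
    -- joint continuity of ψ
    have hψcont : Continuous (fun p : W × ℝ => ψ p.1 p.2) := by
      apply Continuous.inner continuous_const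
      exact hF.comp ((continuous_subtype_val.comp continuous_fst).add
        (continuous_snd.smul continuous_const))
    -- existence of the root φ w
    have hroot : ∀ w : W, ∃ t : ℝ, ψ w t = yn := by
      intro w
      set a : ℝ := min 0 ((yn - ψ w 0) / c) with ha_def
      set bb : ℝ := max 0 ((yn - ψ w 0) / c) with hb_def
      have hab : a ≤ bb := le_trans (min_le_left _ _) (le_max_left _ _)
      have hup : yn ≤ ψ w bb := by
        have := hψgap w 0 bb (le_max_left _ _)
        have h2 : (yn - ψ w 0) / c ≤ bb := le_max_right _ _
        have h3 : yn - ψ w 0 ≤ c * bb := by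
          rw [div_le_iff₀ hc] at h2; linarith [h2]
        simp only [sub_zero] at this
        linarith
      have hdown : ψ w a ≤ yn := by
        have := hψgap w a 0 (min_le_left _ _)
        have h2 : a ≤ (yn - ψ w 0) / c := min_le_right _ _
        have h3 : c * a ≤ yn - ψ w 0 := by
          rw [le_div_iff₀ hc] at h2; linarith [h2]
        simp only [zero_sub] at this
        linarith
      have hcw : ContinuousOn (ψ w) (Set.Icc a bb) :=
        ((hψcont.comp (Continuous.prodMk_right w)).continuousOn)
      have := intermediate_value_Icc hab hcw
      obtain ⟨t, _, ht⟩ := this ⟨hdown, hup⟩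
      exact ⟨t, ht⟩
    choose φ hφ using hroot
    -- uniqueness-type comparison
    have hlt : ∀ (w : W) (t : ℝ), yn < ψ w t → φ w < t := by
      intro w t h
      by_contra hcon
      push_neg at hcon
      have := hψgap w t (φ w) hcon
      rw [hφ w] at this
      nlinarith
    have hgt : ∀ (w : W) (t : ℝ), ψ w t < yn → t < φ w := by
      intro w t h
      by_contra hcon
      push_neg at hcon
      have := hψgap w (φ w) t hcon
      rw [hφ w] at this
      nlinarith
    -- continuity of φ
    have hφcont : Continuous φ := by
      rw [continuous_iff_continuousAt]
      intro w
      rw [Metric.continuousAt_iff]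
      intro ε hε
      have h1 : yn < ψ w (φ w + ε) := by
        have := hψgap w (φ w) (φ w + ε) (by linarith)
        rw [hφ w] at this; nlinarith
      have h2 : ψ w (φ w - ε) < yn := by
        have := hψgap w (φ w - ε) (φ w) (by linarith)
        rw [hφ w] at this; nlinarith
      have c1 : Continuous (fun w' : W => ψ w' (φ w + ε)) :=
        hψcont.comp (Continuous.prodMk_left _)
      have c2 : Continuous (fun w' : W => ψ w' (φ w - ε)) :=
        hψcont.comp (Continuous.prodMk_left _)
      have e1 : ∀ᶠ w' in nhds w, yn < ψ w' (φ w + ε) :=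
        (isOpen_lt continuous_const c1).eventually_mem h1
      have e2 : ∀ᶠ w' in nhds w, ψ w' (φ w - ε) < yn :=
        (isOpen_lt c2 continuous_const).eventually_mem h2
      obtain ⟨δ, hδ, hball⟩ := Metric.eventually_nhds_iff_ball.mp (e1.and e2)
      refine ⟨δ, hδ, fun {w'} hw' => ?_⟩
      obtain ⟨k1, k2⟩ := hball w' hw'
      have l1 : φ w' < φ w + ε := hlt w' _ k1
      have l2 : φ w - ε < φ w' := hgt w' _ k2
      rw [Real.dist_eq, abs_lt]
      constructor <;> linarith
    -- the reduced map G on W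
    set G : W → W := fun w => Submodule.orthogonalProjection W (F ((w : V) + φ w • e)) with hG_def
    have hGcont : Continuous G :=
      (Submodule.orthogonalProjection W).continuous.comp
        (hF.comp (continuous_subtype_val.add (hφcont.smul continuous_const)))
    -- tools for inner products with W
    have hinnerW : ∀ (v : W) (u : V), ⟪(v : V), (Submodule.orthogonalProjection W u : V)⟫ = ⟪(v : V), u⟫ := by
      intro v u
      have hm := Submodule.sub_starProjection_mem_orthogonal (K := W) u
      have := (Submodule.mem_orthogonal W (u - Submodule.orthogonalProjection W u)).mp hm (v : V) v.2
      have expand : ⟪(v : V), u - (Submodule.orthogonalProjection W u : V)⟫ =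
          ⟪(v : V), u⟫ - ⟪(v : V), (Submodule.orthogonalProjection W u : V)⟫ := inner_sub_right _ _ _
      rw [expand] at this
      linarith
    have hinnerE : ∀ v : W, ⟪(v : V), e⟫ = 0 := by
      intro v
      have : e ∈ K := Submodule.mem_span_singleton_self e
      have h := (Submodule.mem_orthogonal K (v : V)).mp v.2 e this
      rw [← real_inner_comm]; exact h
    -- strong monotonicity of G
    have hGmono : ∀ w w' : W, c * ‖w - w'‖ ^ 2 ≤ ⟪w - w', G w - G w'⟫ := by
      intro w w'
      set X : V := (w : V) + φ w • e with hX_def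
      set X' : V := (w' : V) + φ w' • e with hX'_def
      have hinner0 : ⟪e, F X - F X'⟫ = 0 := by
        rw [inner_sub_right]
        have := hφ w
        have := hφ w'
        simp only [hψ_def] at *
        rw [show ⟪e, F X⟫ = yn from hφ w, show ⟪e, F X'⟫ = yn from hφ w']
        ring
      have hXsub : X - X' = ((w - w' : W) : V) + (φ w - φ w') • e := by
        rw [hX_def, hX'_def]
        push_cast
        rw [sub_smul]
        abel
      have key : ⟪((w - w' : W) : V), F X - F X'⟫ = ⟪X - X', F X - F X'⟫ := by
        rw [hXsub, inner_add_left, real_inner_smul_left, hinner0]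
        ring
      have hnorm : ‖((w - w' : W) : V)‖ ^ 2 ≤ ‖X - X'‖ ^ 2 := by
        rw [hXsub, norm_add_sq_real]
        rw [real_inner_smul_right, hinnerE (w - w')]
        have : ‖(φ w - φ w') • e‖ ^ 2 = (φ w - φ w') ^ 2 := by
          rw [norm_smul, he, mul_one, Real.norm_eq_abs, sq_abs]
        nlinarith [sq_nonneg (φ w - φ w')]
      have hWnorm : ‖w - w'‖ = ‖((w - w' : W) : V)‖ := rfl
      have hWinner : ⟪w - w', G w - G w'⟫ = ⟪((w - w' : W) : V), ((G w - G w' : W) : V)⟫ := rfl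
      rw [hWnorm, hWinner]
      have hGsub : ((G w - G w' : W) : V) =
          (Submodule.orthogonalProjection W (F X) : V) - (Submodule.orthogonalProjection W (F X') : V) := rfl
      rw [hGsub, inner_sub_right, hinnerW (w - w') (F X), hinnerW (w - w') (F X'),
        ← inner_sub_right, key]
      calc c * ‖((w - w' : W) : V)‖ ^ 2 ≤ c * ‖X - X'‖ ^ 2 := by nlinarith
        _ ≤ ⟪X - X', F X - F X'⟫ := hmono X X'
    -- apply induction hypothesis
    obtain ⟨w, hw⟩ := ih W hWrank c hc G hGcont hGmono (Submodule.orthogonalProjection W y)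
    refine ⟨(w : V) + φ w • e, ?_⟩
    -- reconstruct
    have decomp : ∀ v : V, v = (Submodule.orthogonalProjection W v : V) + ⟪e, v⟫ • e := by
      intro v
      have h1 : (Submodule.orthogonalProjection K v : V) + (Submodule.orthogonalProjection Kᗮ v : V) = v :=
        K.starProjection_add_starProjection_orthogonal v
      have h2 : (Submodule.orthogonalProjection K v : V) = ⟪e, v⟫ • e := by
        change K.starProjection v = _
        rw [Submodule.starProjection_singleton]
        rw [he]
        norm_num
      conv_lhs => rw [← h1]
      rw [h2]
      exact add_comm _ _
    have hFe : ⟪e, F ((w : V) + φ w • e)⟫ = yn := hφ w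
    have hFp : (Submodule.orthogonalProjection W (F ((w : V) + φ w • e)) : V) =
        (Submodule.orthogonalProjection W y : V) := congrArg Subtype.val hw
    calc F ((w : V) + φ w • e)
        = (Submodule.orthogonalProjection W (F ((w : V) + φ w • e)) : V)
          + ⟪e, F ((w : V) + φ w • e)⟫ • e := decomp _
      _ = (Submodule.orthogonalProjection W y : V) + yn • e := by rw [hFp, hFe]
      _ = y := by rw [hyn_def, ← decomp y]

/-- Well-posedness of the implicit Euler step: for a continuous one-sided Lipschitz drift with
monotone growth, and a small enough step size, `x - h • b x = y` has a unique solution. -/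
theorem stmt_5 (d : ℕ) (hd : 1 ≤ d) (L_b β α : ℝ) (hLb : 0 < L_b) (hβ : 0 < β) (hα : 0 ≤ α)
    (b : EuclideanSpace ℝ (Fin d) → EuclideanSpace ℝ (Fin d)) (hcont : Continuous b)
    (hosl : ∀ x x' : EuclideanSpace ℝ (Fin d), ⟪x - x', b x - b x'⟫ ≤ L_b * ‖x - x'‖ ^ 2)
    (hmono : ∀ x : EuclideanSpace ℝ (Fin d), ⟪x, b x⟫ ≤ α + β * ‖x‖ ^ 2) :
    ∀ h : ℝ, 0 < h → h < 1 / max L_b (2 * β) →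
      ∀ y : EuclideanSpace ℝ (Fin d), ∃! x : EuclideanSpace ℝ (Fin d), x - h • b x = y := by
  intro h hh hhmax y
  set F : EuclideanSpace ℝ (Fin d) → EuclideanSpace ℝ (Fin d) := fun x => x - h • b x with hF_def
  have hFcont : Continuous F := continuous_id.sub (hcont.const_smul h)
  have hhL : h * L_b < 1 := by
    have h1 : (0:ℝ) < max L_b (2 * β) := lt_of_lt_of_le hLb (le_max_left _ _)
    have h2 : h * max L_b (2 * β) < 1 := by
      rw [div_eq_mul_inv, one_mul] at hhmax
      calc h * max L_b (2 * β) < (max L_b (2 * β))⁻¹ * max L_b (2 * β) := by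
            apply mul_lt_mul_of_pos_right hhmax h1
        _ = 1 := inv_mul_cancel₀ (ne_of_gt h1)
    calc h * L_b ≤ h * max L_b (2 * β) := by
          apply mul_le_mul_of_nonneg_left (le_max_left _ _) (le_of_lt hh)
      _ < 1 := h2
  set c : ℝ := 1 - h * L_b with hc_def
  have hc : 0 < c := by simp only [hc_def]; linarith
  have hFmono : ∀ x z : EuclideanSpace ℝ (Fin d),
      c * ‖x - z‖ ^ 2 ≤ ⟪x - z, F x - F z⟫ := by
    intro x z
    have hexp : F x - F z = (x - z) - h • (b x - b z) := by
      simp only [hF_def, smul_sub]; abel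
    rw [hexp, inner_sub_right, real_inner_self_eq_norm_sq, real_inner_smul_right]
    have := hosl x z
    have hb : h * ⟪x - z, b x - b z⟫ ≤ h * (L_b * ‖x - z‖ ^ 2) :=
      mul_le_mul_of_nonneg_left this (le_of_lt hh)
    simp only [hc_def]
    nlinarith
  have hFsurj : Function.Surjective F :=
    strongMono_surjective d (EuclideanSpace ℝ (Fin d)) (finrank_euclideanSpace_fin) c hc
      F hFcont hFmono
  obtain ⟨x, hx⟩ := hFsurj y
  refine ⟨x, hx, ?_⟩
  intro x' hx'
  have hFF : F x' = F x := hx'.trans hx.symm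
  have := hFmono x' x
  rw [hFF, sub_self, inner_zero_right] at this
  have hnorm : ‖x' - x‖ ^ 2 ≤ 0 := by nlinarith
  have : ‖x' - x‖ = 0 := by nlinarith [sq_nonneg ‖x' - x‖, norm_nonneg (x' - x)]
  have := norm_eq_zero.mp this
  rwa [sub_eq_zero] at this
end

section
/- Let d ≥ 1, N ≥ 1 be integers, q > 1 an integer, C₁ ≥ 0, M ≥ 1 an integer and α ∈ (0, 1/2]. Then there exists a constant C, depending only on C₁ and q, such that: for every x ∈ ℝ^d, y ∈ (ℝ^d)^N and a ∈ ℝ^d with ‖a‖ ≤ C₁·(1 + ‖x‖^{q+1} + ((1/N)·Σ_{j=1}^N ‖y_j‖²)^{1/2}), and every u ∈ ℝ^d: ⟨u, a − a/(1 + M^{−α}·‖a‖)⟩ ≤ (1/2)·‖u‖² + C·M^{−2α}·(1 + ‖x‖^{4(1+q)} + ((1/N)·Σ_{j=1}^N ‖y_j‖²)²). -/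
open RealInnerProductSpace

private lemma sq3 (a b c : ℝ) : (a + b + c) ^ 2 ≤ 3 * (a ^ 2 + b ^ 2 + c ^ 2) := by
  nlinarith [sq_nonneg (a - b), sq_nonneg (a - c), sq_nonneg (b - c)]

private lemma pow4_27 (p r : ℝ) (hp : 0 ≤ p) (hr : 0 ≤ r) :
    (1 + p + r) ^ 4 ≤ 27 * (1 + p ^ 4 + r ^ 4) := by
  have h1 : (1 + p + r) ^ 2 ≤ 3 * (1 + p ^ 2 + r ^ 2) := by
    have := sq3 1 p r; linarith
  have h2 : (1 + p ^ 2 + r ^ 2) ^ 2 ≤ 3 * (1 + p ^ 4 + r ^ 4) := by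
    have := sq3 1 (p ^ 2) (r ^ 2)
    nlinarith
  have h0 : 0 ≤ (1 + p + r) ^ 2 := sq_nonneg _
  calc (1 + p + r) ^ 4 = ((1 + p + r) ^ 2) ^ 2 := by ring
    _ ≤ (3 * (1 + p ^ 2 + r ^ 2)) ^ 2 := by
        apply pow_le_pow_left₀ h0 h1
    _ = 9 * (1 + p ^ 2 + r ^ 2) ^ 2 := by ring
    _ ≤ 9 * (3 * (1 + p ^ 4 + r ^ 4)) := by linarith
    _ = 27 * (1 + p ^ 4 + r ^ 4) := by ring

/-- The key taming-bias estimate: for a vector `a` satisfying a polynomial growth bound of degree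
`q+1`, the inner product of any `u` with the taming error `a - a/(1 + M^{-α}‖a‖)` is controlled by
`‖u‖²/2` plus a term of order `M^{-2α}`, with a constant depending only on `C₁` and `q`. -/
theorem stmt_10 (C₁ : ℝ) (hC₁ : 0 ≤ C₁) (q : ℕ) (hq : 1 < q) :
    ∃ C : ℝ, ∀ (d N M : ℕ), 1 ≤ d → 1 ≤ N → 1 ≤ M → ∀ α : ℝ, 0 < α → α ≤ 1 / 2 →
      ∀ (x : EuclideanSpace ℝ (Fin d)) (y : Fin N → EuclideanSpace ℝ (Fin d))
        (a u : EuclideanSpace ℝ (Fin d)),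
        ‖a‖ ≤ C₁ * (1 + ‖x‖ ^ (q + 1) + Real.sqrt ((1 / N) * ∑ j, ‖y j‖ ^ 2)) →
        ⟪u, a - (1 + (M : ℝ) ^ (-α) * ‖a‖)⁻¹ • a⟫
          ≤ (1 / 2) * ‖u‖ ^ 2
            + C * (M : ℝ) ^ (-(2 * α)) * (1 + ‖x‖ ^ (4 * (1 + q)) + ((1 / N) * ∑ j, ‖y j‖ ^ 2) ^ 2) := by
  refine ⟨27 / 2 * C₁ ^ 4, ?_⟩
  intro d N M hd hN hM α hα hα2 x y a u ha
  have hM0 : (0:ℝ) < (M:ℝ) := by exact_mod_cast hM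
  set t : ℝ := (M:ℝ) ^ (-α) with ht
  have htpos : 0 < t := Real.rpow_pos_of_pos hM0 _
  have hna : 0 ≤ ‖a‖ := norm_nonneg a
  have hden : (0:ℝ) < 1 + t * ‖a‖ := by positivity
  set c : ℝ := (1 + t * ‖a‖)⁻¹ with hcdef
  have hc0 : 0 < c := inv_pos.mpr hden
  have h1c : 1 - c = t * ‖a‖ * c := by
    rw [hcdef]; field_simp; ring
  have h1c0 : 0 ≤ 1 - c := by
    rw [h1c]; positivity
  have hc1 : c ≤ 1 := by
    rw [hcdef]
    have h1 : (1:ℝ) ≤ 1 + t * ‖a‖ := by nlinarith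
    calc (1 + t * ‖a‖)⁻¹ ≤ 1⁻¹ := by
          apply inv_anti₀ one_pos h1
      _ = 1 := inv_one
  have h1cle : 1 - c ≤ t * ‖a‖ := by
    rw [h1c]
    calc t * ‖a‖ * c ≤ t * ‖a‖ * 1 := by
          apply mul_le_mul_of_nonneg_left hc1; positivity
      _ = t * ‖a‖ := by ring
  have hsplit : a - c • a = (1 - c) • a := by rw [sub_smul, one_smul]
  have hkey : ⟪u, a - c • a⟫ = (1 - c) * ⟪u, a⟫ := by
    rw [hsplit, real_inner_smul_right]
  -- main chain
  set S : ℝ := (1 / (N:ℝ)) * ∑ j, ‖y j‖ ^ 2 with hS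
  have hsum : 0 ≤ ∑ j, ‖y j‖ ^ 2 := Finset.sum_nonneg fun j _ => sq_nonneg _
  have hS0 : 0 ≤ S := by
    rw [hS]
    exact mul_nonneg (by positivity) hsum
  have hR4 : Real.sqrt S ^ 4 = S ^ 2 := by
    rw [show (4:ℕ) = 2 * 2 from rfl, pow_mul, Real.sq_sqrt hS0]
  have hP4 : (‖x‖ ^ (q + 1)) ^ 4 = ‖x‖ ^ (4 * (1 + q)) := by
    rw [← pow_mul]; ring_nf
  have hB0 : 0 ≤ 1 + ‖x‖ ^ (q + 1) + Real.sqrt S := by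
    have h1 : 0 ≤ ‖x‖ ^ (q + 1) := pow_nonneg (norm_nonneg x) _
    have h2 := Real.sqrt_nonneg S
    linarith
  have ha4 : ‖a‖ ^ 4 ≤ C₁ ^ 4 * (1 + ‖x‖ ^ (q + 1) + Real.sqrt S) ^ 4 := by
    calc ‖a‖ ^ 4 ≤ (C₁ * (1 + ‖x‖ ^ (q + 1) + Real.sqrt S)) ^ 4 := by
          apply pow_le_pow_left₀ hna ha
      _ = C₁ ^ 4 * (1 + ‖x‖ ^ (q + 1) + Real.sqrt S) ^ 4 := by ring
  have h27 : (1 + ‖x‖ ^ (q + 1) + Real.sqrt S) ^ 4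
      ≤ 27 * (1 + (‖x‖ ^ (q + 1)) ^ 4 + Real.sqrt S ^ 4) := by
    exact pow4_27 _ _ (pow_nonneg (norm_nonneg x) _) (Real.sqrt_nonneg _)
  have ht2 : t * t = (M:ℝ) ^ (-(2 * α)) := by
    rw [ht, ← Real.rpow_add hM0]; ring_nf
  have hinner : ⟪u, a⟫ ≤ ‖u‖ * ‖a‖ := real_inner_le_norm u a
  have step1 : ⟪u, a - c • a⟫ ≤ t * ‖a‖ ^ 2 * ‖u‖ := by
    rw [hkey]
    calc (1 - c) * ⟪u, a⟫ ≤ (1 - c) * (‖u‖ * ‖a‖) :=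
          mul_le_mul_of_nonneg_left hinner h1c0
      _ ≤ t * ‖a‖ * (‖u‖ * ‖a‖) := by
          apply mul_le_mul_of_nonneg_right h1cle; positivity
      _ = t * ‖a‖ ^ 2 * ‖u‖ := by ring
  have step2 : t * ‖a‖ ^ 2 * ‖u‖ ≤ (1 / 2) * ‖u‖ ^ 2 + (1 / 2) * (t * ‖a‖ ^ 2) ^ 2 := by
    nlinarith [sq_nonneg (t * ‖a‖ ^ 2 - ‖u‖)]
  have step3 : (1 / 2) * (t * ‖a‖ ^ 2) ^ 2
      ≤ 27 / 2 * C₁ ^ 4 * (M:ℝ) ^ (-(2 * α)) * (1 + ‖x‖ ^ (4 * (1 + q)) + S ^ 2) := by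
    have h1 : ‖a‖ ^ 4 ≤ 27 * C₁ ^ 4 * (1 + ‖x‖ ^ (4 * (1 + q)) + S ^ 2) := by
      calc ‖a‖ ^ 4 ≤ C₁ ^ 4 * (1 + ‖x‖ ^ (q + 1) + Real.sqrt S) ^ 4 := ha4
        _ ≤ C₁ ^ 4 * (27 * (1 + (‖x‖ ^ (q + 1)) ^ 4 + Real.sqrt S ^ 4)) := by
            apply mul_le_mul_of_nonneg_left h27; positivity
        _ = 27 * C₁ ^ 4 * (1 + ‖x‖ ^ (4 * (1 + q)) + S ^ 2) := by
            rw [hP4, hR4]; ring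
    have heq : (1 / 2) * (t * ‖a‖ ^ 2) ^ 2 = (1 / 2) * (t * t) * ‖a‖ ^ 4 := by ring
    rw [heq, ht2]
    have hM2 : 0 ≤ (M:ℝ) ^ (-(2 * α)) := le_of_lt (Real.rpow_pos_of_pos hM0 _)
    calc (1 / 2) * (M:ℝ) ^ (-(2 * α)) * ‖a‖ ^ 4
        ≤ (1 / 2) * (M:ℝ) ^ (-(2 * α)) * (27 * C₁ ^ 4 * (1 + ‖x‖ ^ (4 * (1 + q)) + S ^ 2)) := by
          apply mul_le_mul_of_nonneg_left h1
          exact mul_nonneg (by norm_num) hM2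
      _ = 27 / 2 * C₁ ^ 4 * (M:ℝ) ^ (-(2 * α)) * (1 + ‖x‖ ^ (4 * (1 + q)) + S ^ 2) := by ring
  calc ⟪u, a - c • a⟫ ≤ t * ‖a‖ ^ 2 * ‖u‖ := step1
    _ ≤ (1 / 2) * ‖u‖ ^ 2 + (1 / 2) * (t * ‖a‖ ^ 2) ^ 2 := step2
    _ ≤ (1 / 2) * ‖u‖ ^ 2
        + 27 / 2 * C₁ ^ 4 * (M:ℝ) ^ (-(2 * α)) * (1 + ‖x‖ ^ (4 * (1 + q)) + S ^ 2) := by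
        linarith [step3]
end

section
/- Assume the implicit Euler particle scheme setup described in the context. For every real p ≥ 2 with E‖X_0^1‖^p < ∞ and every m > 0, there exists a constant C(p,m), depending only on d, l, T, L_b, L, C₀, q, α₀, β₀, h*, p, m and E‖X_0^1‖^p, but not on M, N, i, k or h ∈ (0, h*], such that for all 0 ≤ k ≤ M and 1 ≤ i ≤ N: E[ ‖X̃_k^i‖^p · 1_{{k ≤ λ_m^i}} ] ≤ C(p,m). -/
open MeasureTheory ProbabilityTheory RealInnerProductSpace
open scoped ENNReal NNReal


section AuxStmt15

open Real

private lemma stmt15_lintegral_exp_gaussianReal (c : ℝ) (v : ℝ≥0) :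
    ∫⁻ x, ENNReal.ofReal (Real.exp (c * x)) ∂(gaussianReal 0 v)
      = ENNReal.ofReal (Real.exp (c ^ 2 * v / 2)) := by
  by_cases hv : v = 0
  · subst hv
    rw [gaussianReal_zero_var, lintegral_dirac]
    norm_num
  · rw [gaussianReal_of_var_ne_zero _ hv,
      lintegral_withDensity_eq_lintegral_mul _ (measurable_gaussianPDF _ _)
        (show Measurable fun x => ENNReal.ofReal (Real.exp (c * x)) by fun_prop)]
    have hpt : ∀ x : ℝ, gaussianPDF 0 v x * ENNReal.ofReal (Real.exp (c * x))
        = ENNReal.ofReal (Real.exp (c ^ 2 * v / 2)) * gaussianPDF (c * v) v x := by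
      intro x
      rw [gaussianPDF, gaussianPDF, ← ENNReal.ofReal_mul (gaussianPDFReal_nonneg _ _ _),
        ← ENNReal.ofReal_mul (Real.exp_nonneg _)]
      congr 1
      have hv' : (v : ℝ) ≠ 0 := by exact_mod_cast hv
      simp only [gaussianPDFReal]
      have key : Real.exp (-(x - 0) ^ 2 / (2 * (v : ℝ))) * Real.exp (c * x)
          = Real.exp (c ^ 2 * v / 2) * Real.exp (-(x - c * v) ^ 2 / (2 * (v : ℝ))) := by
        rw [← Real.exp_add, ← Real.exp_add]
        congr 1
        field_simp
        ring
      linear_combination (√(2 * π * (v : ℝ)))⁻¹ * key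
    simp_rw [Pi.mul_apply, hpt]
    rw [lintegral_const_mul _ (measurable_gaussianPDF _ _), lintegral_gaussianPDF_eq_one _ hv,
      mul_one]

private lemma stmt15_rpow_le_exp {s p : ℝ} (hs : 0 ≤ s) (hp : 2 ≤ p) :
    s ^ p ≤ p ^ p * Real.exp s := by
  have hp0 : (0:ℝ) < p := by linarith
  have h1 : s ≤ p * Real.exp (s / p) := by
    have h2 : s / p ≤ Real.exp (s / p) := by
      nlinarith [Real.add_one_le_exp (s / p), Real.exp_nonneg (s / p)]
    calc s = p * (s / p) := by field_simp
    _ ≤ p * Real.exp (s / p) := by nlinarith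
  calc s ^ p ≤ (p * Real.exp (s / p)) ^ p :=
        Real.rpow_le_rpow hs h1 hp0.le
    _ = p ^ p * (Real.exp (s / p)) ^ p := Real.mul_rpow hp0.le (Real.exp_nonneg _)
    _ = p ^ p * Real.exp s := by
        rw [← Real.exp_one_rpow (s / p), ← Real.rpow_mul (Real.exp_pos 1).le,
          div_mul_cancel₀ s hp0.ne', Real.exp_one_rpow]

private lemma stmt15_sum_rpow_bound {n : ℕ} (u : Fin n → ℝ) (hu : ∀ a, 0 ≤ u a) {p : ℝ}
    (hp : 2 ≤ p) : (∑ a, u a) ^ p ≤ (n : ℝ) ^ p * ∑ a, (u a) ^ p := by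
  have hp0 : (0:ℝ) < p := by linarith
  set Sp := ∑ a, (u a) ^ p with hSp
  have hSp0 : 0 ≤ Sp := Finset.sum_nonneg fun a _ => Real.rpow_nonneg (hu a) p
  have hub : ∀ a, u a ≤ Sp ^ (1/p) := by
    intro a
    have h1 : (u a) ^ p ≤ Sp := Finset.single_le_sum (f := fun a => (u a) ^ p)
      (fun a _ => Real.rpow_nonneg (hu a) p) (Finset.mem_univ a)
    calc u a = ((u a) ^ p) ^ (1/p) := by
          rw [← Real.rpow_mul (hu a), mul_one_div, div_self hp0.ne', Real.rpow_one]
      _ ≤ Sp ^ (1/p) := Real.rpow_le_rpow (Real.rpow_nonneg (hu a) p) h1 (by positivity)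
  calc (∑ a, u a) ^ p ≤ ((n : ℝ) * Sp ^ (1/p)) ^ p := by
        apply Real.rpow_le_rpow (Finset.sum_nonneg fun a _ => hu a) _ hp0.le
        calc ∑ a, u a ≤ ∑ _a : Fin n, Sp ^ (1/p) := Finset.sum_le_sum fun a _ => hub a
          _ = (n : ℝ) * Sp ^ (1/p) := by simp [mul_comm]
    _ = (n : ℝ) ^ p * Sp := by
        rw [Real.mul_rpow (Nat.cast_nonneg n) (Real.rpow_nonneg hSp0 _),
          ← Real.rpow_mul hSp0]
        rw [one_div, inv_mul_cancel₀ hp0.ne', Real.rpow_one]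

private lemma stmt15_norm_le_sum_abs {n : ℕ} (x : EuclideanSpace ℝ (Fin n)) :
    ‖x‖ ≤ ∑ a, |x a| := by
  rw [EuclideanSpace.norm_eq]
  have h1 : ∑ i, ‖x i‖ ^ 2 ≤ (∑ a, |x a|) ^ 2 := by
    have hterm : ∀ i : Fin n, ‖x i‖ ^ 2 ≤ |x i| * ∑ j, |x j| := by
      intro i
      have h2 : |x i| ≤ ∑ j, |x j| :=
        Finset.single_le_sum (fun j _ => abs_nonneg (x j)) (Finset.mem_univ i)
      have h3 : (0:ℝ) ≤ |x i| := abs_nonneg _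
      rw [Real.norm_eq_abs]
      nlinarith
    calc ∑ i, ‖x i‖ ^ 2 ≤ ∑ i, |x i| * ∑ j, |x j| := Finset.sum_le_sum fun i _ => hterm i
      _ = (∑ a, |x a|) ^ 2 := by rw [← Finset.sum_mul]; ring
  calc √(∑ i, ‖x i‖ ^ 2) ≤ √((∑ a, |x a|) ^ 2) := Real.sqrt_le_sqrt h1
    _ = ∑ a, |x a| := Real.sqrt_sq (Finset.sum_nonneg fun a _ => abs_nonneg (x a))

end AuxStmt15

set_option maxHeartbeats 1600000 in
/-- Stopped `p`-th moment bound for the implicit (backward) Euler particle scheme: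
`E[‖X̃_k^i‖^p · 1_{k ≤ λ_m^i}] ≤ C(p,m)`, where `λ_m^i = inf {k : ‖X̃_k^i‖ > m}`, so that
`k ≤ λ_m^i` is the event `∀ r < k, ‖X̃_r^i‖ ≤ m`.  The constant depends only on the data fixed
before the existential quantifier, not on `M`, `N`, `i`, `k` or the step size `h = T/M ≤ h*`. -/

theorem stmt_15 (d l : ℕ) (hd : 1 ≤ d) (hl : 1 ≤ l) (T : ℝ) (hT : 0 < T)
    (L_b L C₀ α₀ β₀ : ℝ) (hLb : 0 < L_b) (hL : 0 ≤ L) (hC₀ : 0 ≤ C₀) (hα₀ : 0 ≤ α₀)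
    (hβ₀ : 0 < β₀) (q : ℕ) (hq : 1 < q)
    (hstar : ℝ) (hhstar : hstar < 1 / max L_b (2 * β₀))
    (B : (N : ℕ) → ℝ → EuclideanSpace ℝ (Fin d) → (Fin N → EuclideanSpace ℝ (Fin d)) →
      EuclideanSpace ℝ (Fin d))
    (S : (N : ℕ) → ℝ → EuclideanSpace ℝ (Fin d) → (Fin N → EuclideanSpace ℝ (Fin d)) →
      (EuclideanSpace ℝ (Fin l) →L[ℝ] EuclideanSpace ℝ (Fin d)))
    -- (i) one-sided Lipschitz in space
    (hB1 : ∀ (N : ℕ), 1 ≤ N → ∀ t ∈ Set.Icc (0 : ℝ) T,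
      ∀ (x x' : EuclideanSpace ℝ (Fin d)) (y : Fin N → EuclideanSpace ℝ (Fin d)),
      ⟪x - x', B N t x y - B N t x' y⟫ ≤ L_b * ‖x - x'‖ ^ 2)
    -- (ii) locally Lipschitz with polynomial growth in space
    (hB2 : ∀ (N : ℕ), 1 ≤ N → ∀ t ∈ Set.Icc (0 : ℝ) T,
      ∀ (x x' : EuclideanSpace ℝ (Fin d)) (y : Fin N → EuclideanSpace ℝ (Fin d)),
      ‖B N t x y - B N t x' y‖ ≤ L * (1 + ‖x‖ ^ q + ‖x'‖ ^ q) * ‖x - x'‖)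
    -- (iii) 1/2-Hölder in time
    (hB3 : ∀ (N : ℕ), 1 ≤ N → ∀ t ∈ Set.Icc (0 : ℝ) T, ∀ t' ∈ Set.Icc (0 : ℝ) T,
      ∀ (x : EuclideanSpace ℝ (Fin d)) (y : Fin N → EuclideanSpace ℝ (Fin d)),
      ‖B N t x y - B N t' x y‖ ≤ C₀ * Real.sqrt |t - t'|)
    -- (iv) Lipschitz/Hölder bound for the diffusion coefficient
    (hS : ∀ (N : ℕ), 1 ≤ N → ∀ t ∈ Set.Icc (0 : ℝ) T, ∀ t' ∈ Set.Icc (0 : ℝ) T,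
      ∀ (x x' : EuclideanSpace ℝ (Fin d)) (y y' : Fin N → EuclideanSpace ℝ (Fin d)),
      ‖S N t x y - S N t' x' y'‖
        ≤ L * (‖x - x'‖ + Real.sqrt ((1 / N) * ∑ j, ‖y j - y' j‖ ^ 2))
          + C₀ * Real.sqrt |t - t'|)
    -- (v) uniform bound at the spatial origin
    (h0 : ∀ (N : ℕ), 1 ≤ N → ∀ t ∈ Set.Icc (0 : ℝ) T,
      ∀ y : Fin N → EuclideanSpace ℝ (Fin d), ‖B N t 0 y‖ + ‖S N t 0 y‖ ≤ C₀)
    -- (vi) monotone growth condition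
    (hmono : ∀ (N : ℕ), 1 ≤ N → ∀ t ∈ Set.Icc (0 : ℝ) T,
      ∀ (x : EuclideanSpace ℝ (Fin d)) (y : Fin N → EuclideanSpace ℝ (Fin d)),
      ⟪x, B N t x y⟫
          + (1 / 2) * ∑ a : Fin l, ‖S N t x y (EuclideanSpace.single a (1 : ℝ))‖ ^ 2
        ≤ α₀ + β₀ * ‖x‖ ^ 2)
    -- moment exponent and cut-off level
    (p : ℝ) (hp : 2 ≤ p) (m : ℝ) (hm : 0 < m)
    -- law of the initial condition, with finite p-th moment
    (ν : Measure (EuclideanSpace ℝ (Fin d))) (hν : IsProbabilityMeasure ν)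
    (hmom : ∫⁻ x, (‖x‖₊ : ℝ≥0∞) ^ p ∂ν ≠ ⊤) :
    ∃ C : ℝ, ∀ (M N : ℕ), 1 ≤ M → 1 ≤ N → T / M ≤ hstar →
      ∀ (Ω : Type) (mΩ : MeasurableSpace Ω) (P : Measure Ω), IsProbabilityMeasure P →
      ∀ (ΔW : Fin M → Fin N → Ω → EuclideanSpace ℝ (Fin l))
        (X0 : Fin N → Ω → EuclideanSpace ℝ (Fin d))
        (Xt : ℕ → Fin N → Ω → EuclideanSpace ℝ (Fin d)),
      (∀ k i, Measurable (ΔW k i)) →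
      (∀ i, Measurable (X0 i)) →
      -- the coordinates of the Brownian increments form an independent Gaussian family
      iIndepFun
        (fun pr : Fin M × Fin N × Fin l => fun ω => ΔW pr.1 pr.2.1 ω pr.2.2) P →
      (∀ (k : Fin M) (i : Fin N) (a : Fin l),
        P.map (fun ω => ΔW k i ω a) = gaussianReal 0 (T / M).toNNReal) →
      -- the initial conditions are i.i.d. with law ν, independent of the increments
      iIndepFun X0 P →
      (∀ i, P.map (X0 i) = ν) →
      IndepFun (fun ω => fun i => X0 i ω)
        (fun ω => fun pr : Fin M × Fin N × Fin l => ΔW pr.1 pr.2.1 ω pr.2.2) P →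
      -- the implicit Euler particle scheme: initial value, adaptedness, implicit equation
      (∀ i, Xt 0 i = X0 i) →
      (∀ (k : ℕ), k ≤ M → ∀ i : Fin N,
        Measurable[(⨆ j, MeasurableSpace.comap (X0 j) inferInstance)
          ⊔ ⨆ r : Fin M, ⨆ _ : (r : ℕ) < k, ⨆ j, MeasurableSpace.comap (ΔW r j) inferInstance]
          (Xt k i)) →
      (∀ (k : ℕ) (hk : k < M), ∀ (i : Fin N) (ω : Ω),
        Xt (k + 1) i ω
            - (T / M) • B N ((k : ℝ) * (T / M)) (Xt (k + 1) i ω) (fun j => Xt k j ω)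
          = Xt k i ω
            + S N ((k : ℝ) * (T / M)) (Xt k i ω) (fun j => Xt k j ω) (ΔW ⟨k, hk⟩ i ω)) →
      ∀ (k : ℕ), k ≤ M → ∀ i : Fin N,
        ∫⁻ ω in {ω | ∀ r : ℕ, r < k → ‖Xt r i ω‖ ≤ m}, (‖Xt k i ω‖₊ : ℝ≥0∞) ^ p ∂P
          ≤ ENNReal.ofReal C := by
  classical
  set Cν : ℝ := (∫⁻ x, (‖x‖₊ : ℝ≥0∞) ^ p ∂ν).toReal with hCν
  set A : ℝ := 2 * m + 2 * Real.sqrt (hstar * α₀) with hA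
  set K : ℝ := 2 * (L * m + C₀) with hKdef
  set Cp : ℝ := (l : ℝ) ^ p * p ^ p * Real.exp A
      * ((l : ℝ) * (2 * Real.exp (K ^ 2 * hstar / 2))) with hCpdef
  refine ⟨max Cν Cp, ?_⟩
  intro M N hM hN hh Ω mΩ P hP ΔW X0 Xt hΔWm hX0m _hindW hmap _hiid hlaw _hindep hXt0 hadapt
    himpl k hk i
  have hM0 : (0:ℝ) < M := by exact_mod_cast hM
  have hhpos : 0 < T / M := div_pos hT hM0
  have hstarpos : 0 < hstar := lt_of_lt_of_le hhpos hh
  have hK0 : 0 ≤ K := by nlinarith [mul_nonneg hL hm.le]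
  have hA0 : 0 ≤ A := by nlinarith [Real.sqrt_nonneg (hstar * α₀), hm.le]
  have hp0 : (0:ℝ) < p := by linarith
  have hpmeas : Measurable fun x : EuclideanSpace ℝ (Fin d) => ((‖x‖₊ : ℝ≥0∞)) ^ p := by
    fun_prop
  -- measurability of the scheme
  have hXmeas : ∀ r, r ≤ M → ∀ i' : Fin N, Measurable (Xt r i') := by
    intro r hr i'
    refine (hadapt r hr i').mono (sup_le ?_ ?_) le_rfl
    · exact iSup_le fun j => measurable_iff_comap_le.mp (hX0m j)
    · exact iSup_le fun r' => iSup_le fun _ => iSup_le fun j =>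
        measurable_iff_comap_le.mp (hΔWm r' j)
  cases k with
  | zero =>
      have h1 : ∫⁻ ω in {ω | ∀ r : ℕ, r < 0 → ‖Xt r i ω‖ ≤ m},
          ((‖Xt 0 i ω‖₊ : ℝ≥0∞)) ^ p ∂P ≤ ∫⁻ ω, ((‖Xt 0 i ω‖₊ : ℝ≥0∞)) ^ p ∂P :=
        setLIntegral_le_lintegral _ _
      rw [hXt0 i] at h1
      have h2 : ∫⁻ ω, ((‖X0 i ω‖₊ : ℝ≥0∞)) ^ p ∂P = ∫⁻ x, (‖x‖₊ : ℝ≥0∞) ^ p ∂ν := by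
        rw [← hlaw i, lintegral_map hpmeas (hX0m i)]
      refine le_trans ?_ (ENNReal.ofReal_le_ofReal (le_max_left Cν Cp))
      rw [← ENNReal.ofReal_toReal hmom] at h2
      rw [hXt0 i]
      exact h1.trans h2.le
  | succ j =>
      have hjM : j < M := hk
      set w : Ω → EuclideanSpace ℝ (Fin l) := fun ω => ΔW ⟨j, hjM⟩ i ω with hwdef
      have hwmeas : Measurable w := hΔWm _ _
      -- the pointwise bound on the event
      have hpt : ∀ ω ∈ {ω : Ω | ∀ r : ℕ, r < j + 1 → ‖Xt r i ω‖ ≤ m},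
          ‖Xt (j+1) i ω‖ ≤ A + K * ‖w ω‖ := by
        intro ω hω
        have hxm : ‖Xt j i ω‖ ≤ m := hω j (Nat.lt_succ_self j)
        have htmem : ((j : ℝ) * (T / M)) ∈ Set.Icc (0:ℝ) T := by
          constructor
          · positivity
          · have hjle : (j : ℝ) ≤ (M : ℝ) := by exact_mod_cast hjM.le
            have hMh : (M : ℝ) * (T / M) = T := by field_simp
            nlinarith [hhpos.le]
        have heq := himpl j hjM i ω
        set t : ℝ := (j : ℝ) * (T / M)
        set xc : EuclideanSpace ℝ (Fin d) := Xt (j+1) i ω with hxc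
        set xm : EuclideanSpace ℝ (Fin d) := Xt j i ω with hxmdef
        set Y : Fin N → EuclideanSpace ℝ (Fin d) := fun j' => Xt j j' ω with hY
        -- bound on the diffusion coefficient
        have hSnorm : ‖S N t xm Y‖ ≤ L * m + C₀ := by
          have h01 := hS N hN t htmem t htmem xm 0 Y Y
          simp only [sub_zero, sub_self, norm_zero, abs_zero, Real.sqrt_zero, mul_zero,
            add_zero, ne_eq, OfNat.ofNat_ne_zero, not_false_eq_true, zero_pow,
            Finset.sum_const_zero] at h01
          have h02 : ‖S N t 0 Y‖ ≤ C₀ := by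
            have := h0 N hN t htmem Y
            linarith [norm_nonneg (B N t 0 Y)]
          have h03 : ‖S N t xm Y‖ ≤ ‖S N t xm Y - S N t 0 Y‖ + ‖S N t 0 Y‖ := by
            calc ‖S N t xm Y‖ = ‖(S N t xm Y - S N t 0 Y) + S N t 0 Y‖ := by
                  rw [sub_add_cancel]
              _ ≤ ‖S N t xm Y - S N t 0 Y‖ + ‖S N t 0 Y‖ := norm_add_le _ _
          have h04 : L * ‖xm‖ ≤ L * m := mul_le_mul_of_nonneg_left hxm hL
          linarith
        -- bound on the right-hand side
        set Z : EuclideanSpace ℝ (Fin d) := xm + S N t xm Y (w ω) with hZdef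
        have hZ : ‖Z‖ ≤ m + (L * m + C₀) * ‖w ω‖ := by
          calc ‖Z‖ ≤ ‖xm‖ + ‖S N t xm Y (w ω)‖ := norm_add_le _ _
            _ ≤ m + (L * m + C₀) * ‖w ω‖ := by
                refine add_le_add hxm ?_
                exact (ContinuousLinearMap.le_opNorm _ _).trans
                  (mul_le_mul_of_nonneg_right hSnorm (norm_nonneg _))
        -- the inner product identity from the implicit equation
        have hinner : ‖xc‖ ^ 2 - (T / M) * ⟪xc, B N t xc Y⟫ = ⟪xc, Z⟫ := by
          have h2 : ⟪xc, xc - (T / M) • B N t xc Y⟫ = ⟪xc, Z⟫ := by rw [heq]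
          rw [inner_sub_right, real_inner_smul_right, real_inner_self_eq_norm_sq] at h2
          exact h2
        have hmono' : ⟪xc, B N t xc Y⟫ ≤ α₀ + β₀ * ‖xc‖ ^ 2 := by
          have h3 := hmono N hN t htmem xc Y
          have h4 : (0:ℝ) ≤ ∑ a : Fin l,
              ‖S N t xc Y (EuclideanSpace.single a (1:ℝ))‖ ^ 2 :=
            Finset.sum_nonneg fun a _ => sq_nonneg _
          linarith
        have hCS : ⟪xc, Z⟫ ≤ ‖xc‖ * ‖Z‖ := real_inner_le_norm _ _
        -- step size smallness
        have hβ : (T / M) * β₀ ≤ 1 / 2 := by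
          have hmax : 2 * β₀ ≤ max L_b (2 * β₀) := le_max_right _ _
          have hmaxpos : (0:ℝ) < max L_b (2 * β₀) := lt_of_lt_of_le (by linarith) hmax
          have h5 : hstar < 1 / (2 * β₀) :=
            lt_of_lt_of_le hhstar (one_div_le_one_div_of_le (by linarith) hmax)
          have h6 : T / M < 1 / (2 * β₀) := lt_of_le_of_lt hh h5
          have h7 : (T / M) * (2 * β₀) < 1 := by
            have h8 := mul_lt_mul_of_pos_right h6 (show (0:ℝ) < 2 * β₀ by linarith)
            rwa [one_div, inv_mul_cancel₀ (show (2 * β₀ : ℝ) ≠ 0 by linarith)] at h8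
          linarith
        -- quadratic estimate
        have he1 : ⟪xc, Z⟫ ≤ ‖xc‖ * (m + (L * m + C₀) * ‖w ω‖) :=
          hCS.trans (mul_le_mul_of_nonneg_left hZ (norm_nonneg _))
        have he2 : (T / M) * ⟪xc, B N t xc Y⟫ ≤ (T / M) * (α₀ + β₀ * ‖xc‖ ^ 2) :=
          mul_le_mul_of_nonneg_left hmono' hhpos.le
        have he3 : (T / M) * β₀ * ‖xc‖ ^ 2 ≤ (1/2) * ‖xc‖ ^ 2 :=
          mul_le_mul_of_nonneg_right hβ (sq_nonneg _)
        have he4 : (T / M) * α₀ ≤ hstar * α₀ := mul_le_mul_of_nonneg_right hh hα₀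
        set R : ℝ := m + (L * m + C₀) * ‖w ω‖ with hRdef
        have hR0 : 0 ≤ R := by
          have : (0:ℝ) ≤ (L * m + C₀) * ‖w ω‖ :=
            mul_nonneg (by nlinarith [mul_nonneg hL hm.le]) (norm_nonneg _)
          nlinarith [hm.le]
        have hkey : ‖xc‖ ^ 2 ≤ 2 * (‖xc‖ * R) + 2 * (hstar * α₀) := by nlinarith
        have hs0 : 0 ≤ Real.sqrt (hstar * α₀) := Real.sqrt_nonneg _
        have hsq : Real.sqrt (hstar * α₀) ^ 2 = hstar * α₀ :=
          Real.sq_sqrt (by positivity)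
        have hfin : ‖xc‖ ≤ 2 * R + 2 * Real.sqrt (hstar * α₀) := by
          nlinarith [hkey, hsq, norm_nonneg xc, hR0, hs0, mul_nonneg hR0 hs0]
        calc ‖xc‖ ≤ 2 * R + 2 * Real.sqrt (hstar * α₀) := hfin
          _ = A + K * ‖w ω‖ := by rw [hRdef, hA, hKdef]; ring
      -- now integrate the bound
      set c1 : ℝ := (l : ℝ) ^ p * p ^ p * Real.exp A with hc1def
      have hc10 : 0 ≤ c1 := by
        have := Real.rpow_nonneg (Nat.cast_nonneg l) p
        have := Real.rpow_nonneg hp0.le p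
        have := Real.exp_nonneg A
        positivity
      set g : Ω → ℝ≥0∞ := fun ω => ENNReal.ofReal ((A + K * ‖w ω‖) ^ p) with hgdef
      have hgmeas : Measurable g := by
        apply Measurable.ennreal_ofReal
        fun_prop
      set G : Ω → ℝ≥0∞ := fun ω => ENNReal.ofReal c1 *
          ∑ a : Fin l, (ENNReal.ofReal (Real.exp (K * w ω a))
            + ENNReal.ofReal (Real.exp (-K * w ω a))) with hGdef
      have hcoord : ∀ a : Fin l, Measurable fun ω => w ω a := fun a =>
        ((measurable_pi_apply a).comp (WithLp.measurable_ofLp _ _)).comp hwmeas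
      have hsummeas : ∀ a : Fin l, Measurable fun ω =>
          ENNReal.ofReal (Real.exp (K * w ω a)) + ENNReal.ofReal (Real.exp (-K * w ω a)) := by
        intro a
        exact (((hcoord a).const_mul K).exp.ennreal_ofReal).add
          (((hcoord a).const_mul (-K)).exp.ennreal_ofReal)
      -- pointwise bound g ≤ G
      have hgG : ∀ ω, g ω ≤ G ω := by
        intro ω
        have r1 : A + K * ‖w ω‖ ≤ ∑ a, (A + K * |w ω a|) := by
          have hna := stmt15_norm_le_sum_abs (w ω)
          have hKs : K * ‖w ω‖ ≤ K * ∑ a, |w ω a| := mul_le_mul_of_nonneg_left hna hK0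
          have hsum : ∑ a, (A + K * |w ω a|) = (l : ℝ) * A + K * ∑ a, |w ω a| := by
            rw [Finset.sum_add_distrib, Finset.sum_const, Finset.card_univ,
              Fintype.card_fin, ← Finset.mul_sum]
            simp [nsmul_eq_mul]
          have hlA : A ≤ (l : ℝ) * A :=
            le_mul_of_one_le_left hA0 (by exact_mod_cast hl)
          linarith
        have r2 : (A + K * ‖w ω‖) ^ p ≤ (l : ℝ) ^ p * ∑ a, (A + K * |w ω a|) ^ p := by
          refine le_trans (Real.rpow_le_rpow ?_ r1 hp0.le) ?_
          · exact add_nonneg hA0 (mul_nonneg hK0 (norm_nonneg _))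
          · exact stmt15_sum_rpow_bound _ (fun a => add_nonneg hA0 (mul_nonneg hK0 (abs_nonneg _))) hp
        have r3 : ∀ a : Fin l, (A + K * |w ω a|) ^ p
            ≤ p ^ p * Real.exp A * (Real.exp (K * w ω a) + Real.exp (-K * w ω a)) := by
          intro a
          have e1 : (A + K * |w ω a|) ^ p ≤ p ^ p * Real.exp (A + K * |w ω a|) :=
            stmt15_rpow_le_exp (add_nonneg hA0 (mul_nonneg hK0 (abs_nonneg _))) hp
          have e3 : Real.exp (K * |w ω a|) ≤ Real.exp (K * w ω a) + Real.exp (-K * w ω a) := by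
            rcases le_or_gt 0 (w ω a) with hc | hc
            · rw [abs_of_nonneg hc]
              linarith [Real.exp_pos (-K * w ω a)]
            · rw [abs_of_neg hc]
              have : K * -w ω a = -K * w ω a := by ring
              rw [this]
              linarith [Real.exp_pos (K * w ω a)]
          have e4 : (0:ℝ) ≤ p ^ p := Real.rpow_nonneg hp0.le p
          calc (A + K * |w ω a|) ^ p ≤ p ^ p * Real.exp (A + K * |w ω a|) := e1
            _ = p ^ p * Real.exp A * Real.exp (K * |w ω a|) := by
                rw [Real.exp_add]; ring
            _ ≤ p ^ p * Real.exp A * (Real.exp (K * w ω a) + Real.exp (-K * w ω a)) := by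
                refine mul_le_mul_of_nonneg_left e3 ?_
                positivity
        have r4 : (A + K * ‖w ω‖) ^ p
            ≤ c1 * ∑ a, (Real.exp (K * w ω a) + Real.exp (-K * w ω a)) := by
          calc (A + K * ‖w ω‖) ^ p ≤ (l : ℝ) ^ p * ∑ a, (A + K * |w ω a|) ^ p := r2
            _ ≤ (l : ℝ) ^ p * ∑ a, p ^ p * Real.exp A
                  * (Real.exp (K * w ω a) + Real.exp (-K * w ω a)) := by
                refine mul_le_mul_of_nonneg_left (Finset.sum_le_sum fun a _ => r3 a) ?_
                exact Real.rpow_nonneg (Nat.cast_nonneg l) p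
            _ = c1 * ∑ a, (Real.exp (K * w ω a) + Real.exp (-K * w ω a)) := by
                rw [← Finset.mul_sum, hc1def]; ring
        calc g ω ≤ ENNReal.ofReal (c1 * ∑ a, (Real.exp (K * w ω a) + Real.exp (-K * w ω a)))
              := ENNReal.ofReal_le_ofReal r4
          _ = G ω := by
              rw [ENNReal.ofReal_mul hc10,
                ENNReal.ofReal_sum_of_nonneg (fun a _ => by positivity)]
              congr 1
              refine Finset.sum_congr rfl fun a _ => ?_
              rw [ENNReal.ofReal_add (Real.exp_nonneg _) (Real.exp_nonneg _)]
      -- integrate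
      have hint : ∫⁻ ω, G ω ∂P ≤ ENNReal.ofReal Cp := by
        have hv : ((T / M).toNNReal : ℝ) = T / M := Real.coe_toNNReal _ hhpos.le
        have hcoordint : ∀ (a : Fin l) (c : ℝ),
            ∫⁻ ω, ENNReal.ofReal (Real.exp (c * w ω a)) ∂P
              = ENNReal.ofReal (Real.exp (c ^ 2 * (T / M) / 2)) := by
          intro a c
          have hmapa := hmap ⟨j, hjM⟩ i a
          have : ∫⁻ ω, ENNReal.ofReal (Real.exp (c * w ω a)) ∂P
              = ∫⁻ x, ENNReal.ofReal (Real.exp (c * x)) ∂(P.map fun ω => ΔW ⟨j, hjM⟩ i ω a) := by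
            rw [lintegral_map (by fun_prop) (hcoord a)]
          rw [this, hmapa, stmt15_lintegral_exp_gaussianReal, hv]
        have hsumint : ∀ a : Fin l,
            ∫⁻ ω, (ENNReal.ofReal (Real.exp (K * w ω a))
              + ENNReal.ofReal (Real.exp (-K * w ω a))) ∂P
              ≤ ENNReal.ofReal (2 * Real.exp (K ^ 2 * hstar / 2)) := by
          intro a
          rw [lintegral_add_left (((hcoord a).const_mul K).exp.ennreal_ofReal),
            hcoordint a K, hcoordint a (-K)]
          have hKK : (-K) ^ 2 = K ^ 2 := by ring
          rw [hKK]
          have hle : Real.exp (K ^ 2 * (T / M) / 2) ≤ Real.exp (K ^ 2 * hstar / 2) := by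
            apply Real.exp_le_exp.mpr
            nlinarith [sq_nonneg K, hh]
          rw [← ENNReal.ofReal_add (Real.exp_nonneg _) (Real.exp_nonneg _)]
          apply ENNReal.ofReal_le_ofReal
          linarith
        calc ∫⁻ ω, G ω ∂P
            = ENNReal.ofReal c1 * ∑ a : Fin l, ∫⁻ ω, (ENNReal.ofReal (Real.exp (K * w ω a))
                + ENNReal.ofReal (Real.exp (-K * w ω a))) ∂P := by
              rw [hGdef]
              rw [lintegral_const_mul _ (Finset.measurable_sum _ fun a _ => hsummeas a)]
              rw [lintegral_finset_sum _ fun a _ => hsummeas a]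
          _ ≤ ENNReal.ofReal c1 * ∑ _a : Fin l,
                ENNReal.ofReal (2 * Real.exp (K ^ 2 * hstar / 2)) := by
              exact mul_le_mul_right (Finset.sum_le_sum fun a _ => hsumint a) _
          _ = ENNReal.ofReal c1 * ((l : ℝ≥0∞) * ENNReal.ofReal (2 * Real.exp (K ^ 2 * hstar / 2)))
              := by rw [Finset.sum_const, Finset.card_univ, Fintype.card_fin, nsmul_eq_mul]
          _ = ENNReal.ofReal Cp := by
              rw [← ENNReal.ofReal_natCast l, ← ENNReal.ofReal_mul (Nat.cast_nonneg l),
                ← ENNReal.ofReal_mul hc10, hCpdef, hc1def]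
      -- put everything together
      calc ∫⁻ ω in {ω | ∀ r : ℕ, r < j + 1 → ‖Xt r i ω‖ ≤ m},
            ((‖Xt (j+1) i ω‖₊ : ℝ≥0∞)) ^ p ∂P
          ≤ ∫⁻ ω in {ω | ∀ r : ℕ, r < j + 1 → ‖Xt r i ω‖ ≤ m}, g ω ∂P := by
            refine setLIntegral_mono hgmeas fun ω hω => ?_
            rw [hgdef]
            have h8 : ((‖Xt (j+1) i ω‖₊ : ℝ≥0∞)) = ENNReal.ofReal ‖Xt (j+1) i ω‖ :=
              (ofReal_norm (Xt (j+1) i ω)).symm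
            rw [h8, ENNReal.ofReal_rpow_of_nonneg (norm_nonneg _) hp0.le]
            exact ENNReal.ofReal_le_ofReal
              (Real.rpow_le_rpow (norm_nonneg _) (hpt ω hω) hp0.le)
        _ ≤ ∫⁻ ω, g ω ∂P := setLIntegral_le_lintegral _ _
        _ ≤ ∫⁻ ω, G ω ∂P := lintegral_mono hgG
        _ ≤ ENNReal.ofReal Cp := hint
        _ ≤ ENNReal.ofReal (max Cν Cp) := ENNReal.ofReal_le_ofReal (le_max_right _ _)
end
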